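/- The set F of fusible numbers, defined as the least subset of the reals containing 0 and closed under the operation (x,y) ↦ (x+y+1)/2 whenever (x+y+1)/2 > max(x,y), is a well-ordered subset of the reals under the usual order. -/

import Mathlib

open Pointwise


/-- The set of fusible numbers: least subset of ℝ containing 0 and closed
under `(x,y) ↦ (x+y+1)/2` whenever the result exceeds `max x y`. -/
inductive Fusible : ℝ → Prop
  | zero : Fusible 0
  | step (x y : ℝ) : Fusible x → Fusible y →
      max x y < (x + y + 1) / 2 → Fusible ((x + y + 1) / 2)

lemma Fusible.nonneg : ∀ {x : ℝ}, Fusible x → 0 ≤ x := by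
  intro x h
  induction h with
  | zero => exact le_refl 0
  | step x y hx hy h ihx ihy => linarith

/-- The set of fusible numbers is well-ordered under the usual order on ℝ. -/
theorem fusible_wellOrdered : {x : ℝ | Fusible x}.WellFoundedOn (· < ·) := by
  show Set.IsWF _
  rw [Set.isWF_iff_no_descending_seq]
  intro f hf hfF
  simp only [Set.mem_setOf_eq] at hfF
  -- A : set of right accumulation points of the fusible numbers
  set A : Set ℝ := {L | ∀ ε > 0, ∃ z, Fusible z ∧ L < z ∧ z < L + ε} with hAdef
  have hbdd : BddBelow A := by
    refine ⟨-1, fun L hL => ?_⟩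
    by_contra hc
    push_neg at hc
    obtain ⟨z, hz, hz1, hz2⟩ := hL (-1 - L) (by linarith)
    have := hz.nonneg
    linarith
  have hAne : A.Nonempty := by
    refine ⟨⨅ n, f n, fun ε hε => ?_⟩
    have hb : BddBelow (Set.range f) := ⟨0, by rintro _ ⟨n, rfl⟩; exact (hfF n).nonneg⟩
    obtain ⟨n, hn⟩ := exists_lt_of_ciInf_lt (show (⨅ n, f n) < (⨅ n, f n) + ε by linarith)
    refine ⟨f (n + 1), hfF (n + 1), ?_, ?_⟩
    · have h2 : (⨅ m, f m) ≤ f (n + 2) := ciInf_le hb (n + 2)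
      have := hf (Nat.lt_succ_self (n + 1))
      linarith
    · have := hf (Nat.lt_succ_self n)
      linarith
  set L := sInf A with hLdef
  have hLA : L ∈ A := by
    intro ε hε
    obtain ⟨a, haA, ha⟩ := exists_lt_of_csInf_lt hAne (show sInf A < L + ε by rw [← hLdef]; linarith)
    have hLa : L ≤ a := csInf_le hbdd haA
    obtain ⟨z, hz, hz1, hz2⟩ := haA (L + ε - a) (by linarith)
    exact ⟨z, hz, by linarith, by linarith⟩
  have hL0 : 0 ≤ L := by
    by_contra hc
    push_neg at hc
    obtain ⟨z, hz, hz1, hz2⟩ := hLA (-L) (by linarith)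
    have := hz.nonneg
    linarith
  -- there is a gap above L - 1
  have hgap : ∃ ε > 0, ∀ z, Fusible z → ¬(L - 1 < z ∧ z < L - 1 + ε) := by
    by_contra hc
    push_neg at hc
    have hmem : L - 1 ∈ A := by
      intro ε hε
      obtain ⟨z, hz, h1, h2⟩ := hc ε hε
      exact ⟨z, hz, h1, by linarith⟩
    have := csInf_le hbdd hmem
    rw [← hLdef] at this
    linarith
  obtain ⟨ε₀, hε₀, hgap⟩ := hgap
  -- the fusible numbers ≤ L form a well-founded set
  have hWF : Set.IsWF ({x : ℝ | Fusible x} ∩ Set.Iic L) := by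
    rw [Set.isWF_iff_no_descending_seq]
    intro g hg hgmem
    simp only [Set.mem_inter_iff, Set.mem_setOf_eq, Set.mem_Iic] at hgmem
    have hb : BddBelow (Set.range g) := ⟨0, by rintro _ ⟨n, rfl⟩; exact (hgmem n).1.nonneg⟩
    have hgA : (⨅ n, g n) ∈ A := by
      intro ε hε
      obtain ⟨n, hn⟩ := exists_lt_of_ciInf_lt (show (⨅ n, g n) < (⨅ n, g n) + ε by linarith)
      refine ⟨g (n + 1), (hgmem (n + 1)).1, ?_, ?_⟩
      · have h2 : (⨅ m, g m) ≤ g (n + 2) := ciInf_le hb (n + 2)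
        have := hg (Nat.lt_succ_self (n + 1))
        linarith
      · have := hg (Nat.lt_succ_self n)
        linarith
    have h1 : L ≤ ⨅ n, g n := csInf_le hbdd hgA
    have h2 : (⨅ n, g n) ≤ g 1 := ciInf_le hb 1
    have h3 : g 1 < g 0 := hg Nat.zero_lt_one
    have h4 : g 0 ≤ L := (hgmem 0).2
    linarith
  have hsumWF : Set.IsWF (({x : ℝ | Fusible x} ∩ Set.Iic L) +
      ({x : ℝ | Fusible x} ∩ Set.Iic L)) := hWF.add hWF
  set δ : ℝ := min (ε₀ / 2) (1 / 4) with hδdef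
  have hδ0 : 0 < δ := lt_min (by linarith) (by norm_num)
  have hδ1 : δ ≤ ε₀ / 2 := min_le_left _ _
  -- key: every fusible z in (L, L+δ) has 2z - 1 in the sumset
  have hkey : ∀ z : ℝ, Fusible z → L < z → z < L + δ →
      2 * z - 1 ∈ (({x : ℝ | Fusible x} ∩ Set.Iic L) +
        ({x : ℝ | Fusible x} ∩ Set.Iic L)) := by
    intro z hz hz1 hz2
    cases hz with
    | zero => linarith
    | step x y hx hy hm =>
      rcases le_or_gt (max x y) L with hb | hb
      · have hxL : x ≤ L := le_trans (le_max_left x y) hb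
        have hyL : y ≤ L := le_trans (le_max_right x y) hb
        have heq : 2 * ((x + y + 1) / 2) - 1 = x + y := by ring
        rw [heq]
        exact Set.add_mem_add ⟨hx, hxL⟩ ⟨hy, hyL⟩
      · exfalso
        have hafus : Fusible (min x y) := by
          rcases min_cases x y with ⟨h, _⟩ | ⟨h, _⟩ <;> rw [h] <;> assumption
        have hsum : min x y + max x y = x + y := min_add_max x y
        refine hgap (min x y) hafus ⟨by linarith, by linarith⟩
  -- build a strictly decreasing sequence of fusible numbers in (L, L+δ)
  have hnext : ∀ w : ℝ, L < w → ∃ z, Fusible z ∧ L < z ∧ z < L + δ ∧ z < w := by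
    intro w hw
    obtain ⟨z, hz, h1, h2⟩ := hLA (min (w - L) δ) (lt_min (by linarith) hδ0)
    have ha := min_le_left (w - L) δ
    have hb := min_le_right (w - L) δ
    exact ⟨z, hz, h1, by linarith, by linarith⟩
  choose nxt hn1 hn2 hn3 hn4 using hnext
  obtain ⟨z0, hz0, hz01, hz02⟩ := hLA δ hδ0
  let seq : ℕ → {w : ℝ // Fusible w ∧ L < w ∧ w < L + δ} := fun n =>
    Nat.rec ⟨z0, hz0, hz01, hz02⟩
      (fun _ p => ⟨nxt p.1 p.2.2.1, hn1 p.1 p.2.2.1, hn2 p.1 p.2.2.1, hn3 p.1 p.2.2.1⟩) n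
  have hanti : StrictAnti fun n => 2 * (seq n).1 - 1 := by
    apply strictAnti_nat_of_succ_lt
    intro n
    have : (seq (n + 1)).1 < (seq n).1 := hn4 (seq n).1 (seq n).2.2.1
    linarith
  exact (Set.isWF_iff_no_descending_seq.mp hsumWF) (fun n => 2 * (seq n).1 - 1) hanti
    (fun n => hkey (seq n).1 (seq n).2.1 (seq n).2.2.1 (seq n).2.2.2)
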